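/- For every ζ ∈ ℂ with ζ ≠ 0, one has p(-1/conj(ζ), ζ) · conj(ζ)^N = Σ_{i=0}^N λ_i² ∏_{j≠i} |ζ - γ_j|², and this quantity is a positive real number. In particular the JNR spectral curve does not intersect the anti-diagonal. -/

import Mathlib

open Finset

/-- On the anti-diagonal the JNR polynomial is a positive real: the curve does
not intersect the anti-diagonal. -/
theorem jnr_antidiagonal_positive (N : ℕ) (hN : 1 ≤ N) (lam : Fin (N+1) → ℝ)
    (hlam : ∀ i, 0 < lam i) (γ : Fin (N+1) → ℂ) (hγ : Function.Injective γ)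
    (p : ℂ → ℂ → ℂ)
    (hp : ∀ η ζ, p η ζ = ∑ i, (lam i : ℂ)^2 *
      ∏ j ∈ Finset.univ.erase i, (ζ - γ j) * (1 + η * (starRingEnd ℂ) (γ j)))
    (ζ : ℂ) (hζ : ζ ≠ 0) :
    p (-1 / (starRingEnd ℂ) ζ) ζ * ((starRingEnd ℂ) ζ)^N =
      ((∑ i, (lam i)^2 * ∏ j ∈ Finset.univ.erase i, ‖ζ - γ j‖^2 : ℝ) : ℂ) ∧
    0 < ∑ i, (lam i)^2 * ∏ j ∈ Finset.univ.erase i, ‖ζ - γ j‖^2 := by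
  have hc : (starRingEnd ℂ) ζ ≠ 0 := by
    simpa using hζ
  have key : ∀ i : Fin (N+1),
      (∏ j ∈ Finset.univ.erase i,
        (ζ - γ j) * (1 + (-1 / (starRingEnd ℂ) ζ) * (starRingEnd ℂ) (γ j))) *
        ((starRingEnd ℂ) ζ)^N
      = ∏ j ∈ Finset.univ.erase i, ((‖ζ - γ j‖ ^ 2 : ℝ) : ℂ) := by
    intro i
    have hcard : (Finset.univ.erase i).card = N := by
      simp [Finset.card_erase_of_mem]
    rw [show ((starRingEnd ℂ) ζ)^N = ∏ _j ∈ Finset.univ.erase i, (starRingEnd ℂ) ζ from by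
      rw [Finset.prod_const, hcard], ← Finset.prod_mul_distrib]
    refine Finset.prod_congr rfl fun j hj => ?_
    have h1 : (ζ - γ j) * (1 + (-1 / (starRingEnd ℂ) ζ) * (starRingEnd ℂ) (γ j)) *
        (starRingEnd ℂ) ζ = (ζ - γ j) * (starRingEnd ℂ) (ζ - γ j) := by
      have h2 : (1 + (-1 / (starRingEnd ℂ) ζ) * (starRingEnd ℂ) (γ j)) * (starRingEnd ℂ) ζ
          = (starRingEnd ℂ) ζ - (starRingEnd ℂ) (γ j) := by
        field_simp
        ring
      rw [mul_assoc, h2, map_sub]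
    rw [h1, Complex.mul_conj]
    norm_cast
    exact (Complex.sq_norm _).symm
  constructor
  · rw [hp, Finset.sum_mul]
    push_cast
    refine Finset.sum_congr rfl fun i _ => ?_
    rw [mul_assoc, key i]
    norm_cast
  · have hnn : ∀ i ∈ (Finset.univ : Finset (Fin (N+1))), 0 ≤
        (lam i)^2 * ∏ j ∈ Finset.univ.erase i, ‖ζ - γ j‖^2 := by
      intro i _
      exact mul_nonneg (sq_nonneg _) (Finset.prod_nonneg fun j _ => sq_nonneg _)
    refine Finset.sum_pos' hnn ?_
    by_cases hex : ∃ i₀, ζ = γ i₀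
    · obtain ⟨i₀, hi₀⟩ := hex
      refine ⟨i₀, Finset.mem_univ _, mul_pos (pow_pos (hlam i₀) 2)
        (Finset.prod_pos fun j hj => ?_)⟩
      have hjne : j ≠ i₀ := (Finset.mem_erase.mp hj).1
      have : ζ - γ j ≠ 0 := by
        rw [hi₀, sub_ne_zero]
        exact fun h => hjne (hγ h.symm)
      exact pow_pos (norm_pos_iff.mpr this) 2
    · refine ⟨0, Finset.mem_univ _, mul_pos (pow_pos (hlam 0) 2)
        (Finset.prod_pos fun j hj => ?_)⟩
      have : ζ - γ j ≠ 0 := sub_ne_zero.mpr fun h => hex ⟨j, h⟩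
      exact pow_pos (norm_pos_iff.mpr this) 2
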